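/- arXiv:1709.02407 — 2 statements merged into one kernel-verified Lean document; each statement's English description precedes it below -/
import Mathlib

section
/- Let t ∈ ℝ, p ∈ [0,1], and let E₀ = √p·I₂, E₁ = √(1−p)·σ_x be the Bit Flip Kraus operators. Set M_k := U_qs(t)† · (E_k ⊗ I₄) for k = 0,1 (noise acting on the first of the three qubits). Then the average fidelity F_avg := (1/(8·9))·(tr(M₀†M₀ + M₁†M₁) + |tr M₀|² + |tr M₁|²) equals (1/18)·(p·(cos(t) + 3)² + 2); in particular the Bit Flip and Phase Flip channels yield the same average fidelity for the quantum switch. -/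
open Matrix Complex

/-- The Hamiltonian of the quantum qubit switch: the 8×8 complex matrix whose only
nonzero entries are `(H_qs)_{3,5} = (H_qs)_{5,3} = 1`. -/
noncomputable def Hqs : Matrix (Fin 8) (Fin 8) ℂ :=
  Matrix.of fun i j =>
    if (i = 3 ∧ j = 5) ∨ (i = 5 ∧ j = 3) then 1 else 0

/-- The time-evolution operator `U_qs(t) = exp(−i t H_qs)` (matrix exponential). -/
noncomputable def Uqs (t : ℝ) : Matrix (Fin 8) (Fin 8) ℂ :=
  NormedSpace.exp ((-(Complex.I * (t : ℂ))) • Hqs)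

/-- Kronecker product `E ⊗ I₄` of a one-qubit operator E with the identity on the
remaining two qubits: entry (4a+r, 4b+c) is `E a b · δ_{r c}`. -/
noncomputable def kronI4 (E : Matrix (Fin 2) (Fin 2) ℂ) : Matrix (Fin 8) (Fin 8) ℂ :=
  Matrix.of fun r c =>
    E ⟨r.val / 4, by omega⟩ ⟨c.val / 4, by omega⟩ *
      (if r.val % 4 = c.val % 4 then 1 else 0)

/-- Average fidelity between U_qs(t) and the noisy evolution given by Kraus operators
E₀, E₁ acting on the first qubit: with M_k = U_qs(t)†·(E_k ⊗ I₄) and n = 8,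
F_avg = (1/(n(n+1)))·(tr(M₀†M₀ + M₁†M₁) + |tr M₀|² + |tr M₁|²). -/
noncomputable def Favg (t : ℝ) (E₀ E₁ : Matrix (Fin 2) (Fin 2) ℂ) : ℂ :=
  (1 / (8 * 9) : ℂ) *
    ((((Uqs t)ᴴ * kronI4 E₀)ᴴ * ((Uqs t)ᴴ * kronI4 E₀)
      + ((Uqs t)ᴴ * kronI4 E₁)ᴴ * ((Uqs t)ᴴ * kronI4 E₁)).trace
    + ((‖((Uqs t)ᴴ * kronI4 E₀).trace‖ ^ 2 : ℝ) : ℂ)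
    + ((‖((Uqs t)ᴴ * kronI4 E₁).trace‖ ^ 2 : ℝ) : ℂ))

/-- The Pauli X matrix. -/
def σx : Matrix (Fin 2) (Fin 2) ℂ := !![0, 1; 1, 0]

/-- The Pauli Z matrix. -/
def σz : Matrix (Fin 2) (Fin 2) ℂ := !![1, 0; 0, -1]

/-! ### Auxiliary machinery -/

lemma exp_smul_idem {N : Type*} [Fintype N] [DecidableEq N] (a : ℂ) (Q : Matrix N N ℂ)
    (hQ : Q * Q = Q) :
    NormedSpace.exp (a • Q) = 1 + (Complex.exp a - 1) • Q := by
  have hpow : ∀ n : ℕ, Q ^ (n + 1) = Q := by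
    intro n
    induction n with
    | zero => simp
    | succ k ih => rw [pow_succ, ih, hQ]
  have hfun : (fun n : ℕ => ((n.factorial : ℂ)⁻¹) • (a • Q) ^ n)
      = fun n : ℕ => (((n.factorial : ℂ)⁻¹ * a ^ n) • Q + if n = 0 then 1 - Q else 0) := by
    funext n
    cases n with
    | zero => simp
    | succ k =>
      simp [smul_pow, hpow, smul_smul]
  have hsum : Summable fun n : ℕ => ((n.factorial : ℂ)⁻¹) • a ^ n :=
    NormedSpace.expSeries_summable' (𝕂 := ℂ) a
  have hsum' : Summable fun n : ℕ => ((n.factorial : ℂ)⁻¹ * a ^ n) := by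
    simpa [smul_eq_mul] using hsum
  have hs1 : Summable fun n : ℕ => ((n.factorial : ℂ)⁻¹ * a ^ n) • Q := hsum'.smul_const Q
  have hs2 : Summable fun n : ℕ => (if n = 0 then (1 - Q : Matrix N N ℂ) else 0) :=
    (hasSum_ite_eq 0 (1 - Q)).summable
  rw [NormedSpace.exp_eq_tsum ℂ]
  simp only []
  rw [hfun, Summable.tsum_add hs1 hs2, Summable.tsum_smul_const hsum', (hasSum_ite_eq 0 (1 - Q)).tsum_eq]
  have hexp : (∑' n : ℕ, ((n.factorial : ℂ)⁻¹ * a ^ n)) = Complex.exp a := by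
    rw [Complex.exp_eq_exp_ℂ, NormedSpace.exp_eq_tsum ℂ]
    simp [smul_eq_mul]
  rw [hexp]
  ext i j
  simp [Matrix.add_apply, Matrix.sub_apply, Matrix.smul_apply]
  ring

/-- The projection onto the span of `|3⟩, |5⟩`. -/
noncomputable def Pqs : Matrix (Fin 8) (Fin 8) ℂ :=
  Matrix.of fun i j =>
    if (i = 3 ∧ j = 3) ∨ (i = 5 ∧ j = 5) then 1 else 0

lemma hHH : Hqs * Hqs = Pqs := by
  ext i j
  fin_cases i <;> fin_cases j <;>
    simp [Hqs, Pqs, Matrix.mul_apply, Fin.sum_univ_eight]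

lemma hPP : Pqs * Pqs = Pqs := by
  ext i j
  fin_cases i <;> fin_cases j <;>
    simp [Pqs, Matrix.mul_apply, Fin.sum_univ_eight]

lemma hPH : Pqs * Hqs = Hqs := by
  ext i j
  fin_cases i <;> fin_cases j <;>
    simp [Hqs, Pqs, Matrix.mul_apply, Fin.sum_univ_eight]

lemma hHP : Hqs * Pqs = Hqs := by
  ext i j
  fin_cases i <;> fin_cases j <;>
    simp [Hqs, Pqs, Matrix.mul_apply, Fin.sum_univ_eight]

lemma hHherm : Hqsᴴ = Hqs := by
  ext i j
  fin_cases i <;> fin_cases j <;> simp [Hqs, Matrix.conjTranspose_apply]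

lemma trace_Hqs : Hqs.trace = 0 := by
  simp [Matrix.trace, Matrix.diag, Hqs, Fin.sum_univ_eight, Fin.ext_iff]
  decide

lemma trace_Pqs : Pqs.trace = 2 := by
  simp [Matrix.trace, Matrix.diag, Pqs, Fin.sum_univ_eight, Fin.ext_iff]
  norm_cast

lemma fv0 : ((0:Fin 8):ℕ) = 0 := rfl
lemma fv1 : ((1:Fin 8):ℕ) = 1 := rfl
lemma fv2 : ((2:Fin 8):ℕ) = 2 := rfl
lemma fv3 : ((3:Fin 8):ℕ) = 3 := rfl
lemma fv4 : ((4:Fin 8):ℕ) = 4 := rfl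
lemma fv5 : ((5:Fin 8):ℕ) = 5 := rfl
lemma fv6 : ((6:Fin 8):ℕ) = 6 := rfl
lemma fv7 : ((7:Fin 8):ℕ) = 7 := rfl

lemma kron_one : kronI4 1 = 1 := by
  ext i j
  fin_cases i <;> fin_cases j <;>
    simp (config := { decide := true }) [kronI4, Matrix.one_apply, Fin.ext_iff, fv0, fv1, fv2, fv3,
      fv4, fv5, fv6, fv7, Fin.mk_zero, Fin.mk_one, Matrix.cons_val_zero, Matrix.cons_val_one,
      Matrix.head_cons]

lemma kron_smul (c : ℂ) (E : Matrix (Fin 2) (Fin 2) ℂ) :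
    kronI4 (c • E) = c • kronI4 E := by
  ext i j
  simp [kronI4, mul_assoc]

lemma hXX : (kronI4 σx)ᴴ * kronI4 σx = 1 := by
  ext i j
  fin_cases i <;> fin_cases j <;>
    simp (config := { decide := true }) [kronI4, σx, Matrix.mul_apply, Matrix.conjTranspose_apply,
      Fin.sum_univ_eight, Matrix.one_apply, Fin.ext_iff, fv0, fv1, fv2, fv3, fv4, fv5, fv6, fv7,
      Fin.mk_zero, Fin.mk_one, Matrix.cons_val_zero, Matrix.cons_val_one, Matrix.head_cons]

lemma hZZ : (kronI4 σz)ᴴ * kronI4 σz = 1 := by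
  ext i j
  fin_cases i <;> fin_cases j <;>
    simp (config := { decide := true }) [kronI4, σz, Matrix.mul_apply, Matrix.conjTranspose_apply,
      Fin.sum_univ_eight, Matrix.one_apply, Fin.ext_iff, fv0, fv1, fv2, fv3, fv4, fv5, fv6, fv7,
      Fin.mk_zero, Fin.mk_one, Matrix.cons_val_zero, Matrix.cons_val_one, Matrix.head_cons]

lemma trX : (kronI4 σx).trace = 0 := by
  simp (config := { decide := true }) [Matrix.trace, Matrix.diag, kronI4, σx,
    Fin.sum_univ_eight, fv0, fv1, fv2, fv3, fv4, fv5, fv6, fv7,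
    Fin.mk_zero, Fin.mk_one, Matrix.cons_val_zero, Matrix.cons_val_one, Matrix.head_cons]

lemma trZ : (kronI4 σz).trace = 0 := by
  simp (config := { decide := true }) [Matrix.trace, Matrix.diag, kronI4, σz,
    Fin.sum_univ_eight, fv0, fv1, fv2, fv3, fv4, fv5, fv6, fv7,
    Fin.mk_zero, Fin.mk_one, Matrix.cons_val_zero, Matrix.cons_val_one, Matrix.head_cons]

lemma trPX : (Pqs * kronI4 σx).trace = 0 := by
  simp (config := { decide := true }) [Matrix.trace, Matrix.diag, Matrix.mul_apply, Pqs, kronI4,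
    σx, Fin.sum_univ_eight, Fin.ext_iff, fv0, fv1, fv2, fv3, fv4, fv5, fv6, fv7,
    Fin.mk_zero, Fin.mk_one, Matrix.cons_val_zero, Matrix.cons_val_one, Matrix.head_cons]

lemma trHX : (Hqs * kronI4 σx).trace = 0 := by
  simp (config := { decide := true }) [Matrix.trace, Matrix.diag, Matrix.mul_apply, Hqs, kronI4,
    σx, Fin.sum_univ_eight, Fin.ext_iff, fv0, fv1, fv2, fv3, fv4, fv5, fv6, fv7,
    Fin.mk_zero, Fin.mk_one, Matrix.cons_val_zero, Matrix.cons_val_one, Matrix.head_cons]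

lemma trPZ : (Pqs * kronI4 σz).trace = 0 := by
  simp (config := { decide := true }) [Matrix.trace, Matrix.diag, Matrix.mul_apply, Pqs, kronI4,
    σz, Fin.sum_univ_eight, Fin.ext_iff, fv0, fv1, fv2, fv3, fv4, fv5, fv6, fv7,
    Fin.mk_zero, Fin.mk_one, Matrix.cons_val_zero, Matrix.cons_val_one, Matrix.head_cons]

lemma trHZ : (Hqs * kronI4 σz).trace = 0 := by
  simp (config := { decide := true }) [Matrix.trace, Matrix.diag, Matrix.mul_apply, Hqs, kronI4,
    σz, Fin.sum_univ_eight, Fin.ext_iff, fv0, fv1, fv2, fv3, fv4, fv5, fv6, fv7,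
    Fin.mk_zero, Fin.mk_one, Matrix.cons_val_zero, Matrix.cons_val_one, Matrix.head_cons]

/-! ### The spectral idempotents -/

noncomputable def Qp : Matrix (Fin 8) (Fin 8) ℂ := (2⁻¹ : ℂ) • (Pqs + Hqs)
noncomputable def Qm : Matrix (Fin 8) (Fin 8) ℂ := (2⁻¹ : ℂ) • (Pqs - Hqs)

lemma hQpQp : Qp * Qp = Qp := by
  unfold Qp
  rw [smul_mul_assoc, mul_smul_comm, smul_smul, add_mul, mul_add, mul_add, hPP, hPH, hHP, hHH]
  module

lemma hQmQm : Qm * Qm = Qm := by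
  unfold Qm
  rw [smul_mul_assoc, mul_smul_comm, smul_smul, sub_mul, mul_sub, mul_sub, hPP, hPH, hHP, hHH]
  module

lemma hQpQm : Qp * Qm = 0 := by
  unfold Qp Qm
  rw [smul_mul_assoc, mul_smul_comm, smul_smul, add_mul, mul_sub, mul_sub, hPP, hPH, hHP, hHH]
  module

lemma hQmQp : Qm * Qp = 0 := by
  unfold Qp Qm
  rw [smul_mul_assoc, mul_smul_comm, smul_smul, sub_mul, mul_add, mul_add, hPP, hPH, hHP, hHH]
  module

lemma trace_Qp : Qp.trace = 1 := by
  unfold Qp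
  rw [Matrix.trace_smul, Matrix.trace_add, trace_Pqs, trace_Hqs]
  simp

lemma trace_Qm : Qm.trace = 1 := by
  unfold Qm
  rw [Matrix.trace_smul, Matrix.trace_sub, trace_Pqs, trace_Hqs]
  simp

/-! ### The closed form of the evolution operator -/

lemma exp_H (a : ℂ) : NormedSpace.exp (a • Hqs)
    = 1 + (Complex.exp a - 1) • Qp + (Complex.exp (-a) - 1) • Qm := by
  have hsplit : a • Hqs = a • Qp + (-a) • Qm := by
    unfold Qp Qm; module
  have hcomm : Commute (a • Qp) ((-a) • Qm) := by
    unfold Commute SemiconjBy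
    rw [smul_mul_assoc, mul_smul_comm, smul_mul_assoc, mul_smul_comm, hQpQm, hQmQp]
    simp
  rw [hsplit, Matrix.exp_add_of_commute _ _ hcomm, exp_smul_idem a Qp hQpQp,
    exp_smul_idem (-a) Qm hQmQm]
  simp only [mul_add, add_mul, one_mul, mul_one, mul_smul_comm, smul_mul_assoc, smul_smul,
    hQpQm, smul_zero]
  module

lemma Uqs_eq (t : ℝ) : Uqs t
    = 1 + (Complex.exp (-(Complex.I * t)) - 1) • Qp + (Complex.exp (Complex.I * t) - 1) • Qm := by
  rw [Uqs, exp_H, neg_neg]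

lemma hAherm (t : ℝ) : ((-(Complex.I * (t : ℂ))) • Hqs)ᴴ = -((-(Complex.I * (t : ℂ))) • Hqs) := by
  rw [Matrix.conjTranspose_smul, hHherm, ← neg_smul]
  congr 1
  simp [Complex.ext_iff]

lemma UqsH_eq (t : ℝ) : (Uqs t)ᴴ
    = 1 + (Complex.exp (Complex.I * t) - 1) • Qp + (Complex.exp (-(Complex.I * t)) - 1) • Qm := by
  rw [Uqs, ← Matrix.exp_conjTranspose, hAherm, ← neg_smul, neg_neg, exp_H]

lemma hUU (t : ℝ) : Uqs t * (Uqs t)ᴴ = 1 := by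
  rw [Uqs, ← Matrix.exp_conjTranspose, hAherm,
    ← Matrix.exp_add_of_commute _ _ (Commute.neg_right (Commute.refl ((-(Complex.I * (t : ℂ))) • Hqs))), add_neg_cancel,
    NormedSpace.exp_zero]

lemma trace_UqsH (t : ℝ) : (Uqs t)ᴴ.trace = ((6 + 2 * Real.cos t : ℝ) : ℂ) := by
  rw [UqsH_eq, Matrix.trace_add, Matrix.trace_add, Matrix.trace_smul, Matrix.trace_smul,
    Matrix.trace_one, trace_Qp, trace_Qm]
  have h1 : Complex.exp (Complex.I * t) = Complex.cos t + Complex.sin t * Complex.I := by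
    rw [mul_comm, Complex.exp_mul_I]
  have h2 : Complex.exp (-(Complex.I * t)) = Complex.cos t - Complex.sin t * Complex.I := by
    rw [show -(Complex.I * (t:ℂ)) = (-(t:ℂ)) * Complex.I by ring, Complex.exp_mul_I,
      Complex.cos_neg, Complex.sin_neg]
    ring
  rw [h1, h2, ← Complex.ofReal_cos]
  simp only [smul_eq_mul, mul_one, Fintype.card_fin]
  push_cast
  ring

/-! ### The main computation -/

lemma favg_main (t : ℝ) (c₀ c₁ : ℝ) (W : Matrix (Fin 2) (Fin 2) ℂ)
    (hW : (kronI4 W)ᴴ * kronI4 W = 1)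
    (h1 : (Pqs * kronI4 W).trace = 0)
    (h2 : (Hqs * kronI4 W).trace = 0)
    (h3 : (kronI4 W).trace = 0) :
    Favg t (((c₀ : ℝ) : ℂ) • (1 : Matrix (Fin 2) (Fin 2) ℂ)) (((c₁ : ℝ) : ℂ) • W)
      = (((8 * c₀ ^ 2 + 8 * c₁ ^ 2 + (c₀ * (6 + 2 * Real.cos t)) ^ 2) / 72 : ℝ) : ℂ) := by
  have hQpW : (Qp * kronI4 W).trace = 0 := by
    unfold Qp
    rw [smul_mul_assoc, Matrix.trace_smul, add_mul, Matrix.trace_add, h1, h2]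
    simp
  have hQmW : (Qm * kronI4 W).trace = 0 := by
    unfold Qm
    rw [smul_mul_assoc, Matrix.trace_smul, sub_mul, Matrix.trace_sub, h1, h2]
    simp
  have hUW : ((Uqs t)ᴴ * kronI4 W).trace = 0 := by
    rw [UqsH_eq, add_mul, add_mul, one_mul, smul_mul_assoc, smul_mul_assoc,
      Matrix.trace_add, Matrix.trace_add, Matrix.trace_smul, Matrix.trace_smul, hQpW, hQmW, h3]
    simp
  have hM0 : (Uqs t)ᴴ * kronI4 (((c₀ : ℝ) : ℂ) • 1) = ((c₀ : ℝ) : ℂ) • (Uqs t)ᴴ := by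
    rw [kron_smul, kron_one, mul_smul_comm, mul_one]
  have hM1 : (Uqs t)ᴴ * kronI4 (((c₁ : ℝ) : ℂ) • W) = ((c₁ : ℝ) : ℂ) • ((Uqs t)ᴴ * kronI4 W) := by
    rw [kron_smul, mul_smul_comm]
  have e1 : ((Uqs t)ᴴ * kronI4 (((c₀ : ℝ) : ℂ) • 1))ᴴ * ((Uqs t)ᴴ * kronI4 (((c₀ : ℝ) : ℂ) • 1))
      = (((c₀ ^ 2 : ℝ)) : ℂ) • (1 : Matrix (Fin 8) (Fin 8) ℂ) := by
    rw [hM0, Matrix.conjTranspose_smul, Matrix.conjTranspose_conjTranspose,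
      smul_mul_assoc, mul_smul_comm, hUU, smul_smul]
    congr 1
    rw [Complex.star_def, Complex.conj_ofReal]
    push_cast
    ring
  have e2 : ((Uqs t)ᴴ * kronI4 (((c₁ : ℝ) : ℂ) • W))ᴴ * ((Uqs t)ᴴ * kronI4 (((c₁ : ℝ) : ℂ) • W))
      = (((c₁ ^ 2 : ℝ)) : ℂ) • (1 : Matrix (Fin 8) (Fin 8) ℂ) := by
    rw [hM1, Matrix.conjTranspose_smul, smul_mul_assoc, mul_smul_comm, smul_smul]
    rw [Matrix.conjTranspose_mul, Matrix.conjTranspose_conjTranspose]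
    have : (kronI4 W)ᴴ * Uqs t * ((Uqs t)ᴴ * kronI4 W) = 1 := by
      rw [mul_assoc, ← mul_assoc (Uqs t), hUU, one_mul, hW]
    rw [this]
    congr 1
    rw [Complex.star_def, Complex.conj_ofReal]
    push_cast
    ring
  have habs0 : ((‖((Uqs t)ᴴ * kronI4 (((c₀ : ℝ) : ℂ) • 1)).trace‖ ^ 2 : ℝ) : ℂ)
      = (((c₀ * (6 + 2 * Real.cos t)) ^ 2 : ℝ) : ℂ) := by
    rw [hM0, Matrix.trace_smul, trace_UqsH, smul_eq_mul, ← Complex.ofReal_mul,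
      Complex.norm_real, Real.norm_eq_abs, _root_.sq_abs]
  have habs1 : ((‖((Uqs t)ᴴ * kronI4 (((c₁ : ℝ) : ℂ) • W)).trace‖ ^ 2 : ℝ) : ℂ) = 0 := by
    rw [hM1, Matrix.trace_smul, hUW]
    simp
  rw [Favg, e1, e2, habs0, habs1, Matrix.trace_add, Matrix.trace_smul, Matrix.trace_smul,
    Matrix.trace_one]
  simp only [smul_eq_mul, Fintype.card_fin]
  push_cast
  ring

/-- Average fidelity of the quantum switch under Bit Flip noise on the first qubit:
F_avg = (1/18)·(p·(cos t + 3)² + 2); in particular it coincides with the average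
fidelity for the Phase Flip channel. -/
theorem average_fidelity_bit_flip (t : ℝ) (p : ℝ) (hp₀ : 0 ≤ p) (hp₁ : p ≤ 1) :
    Favg t (((Real.sqrt p : ℝ) : ℂ) • (1 : Matrix (Fin 2) (Fin 2) ℂ))
        (((Real.sqrt (1 - p) : ℝ) : ℂ) • σx) =
      ((1 / 18 * (p * (Real.cos t + 3) ^ 2 + 2) : ℝ) : ℂ) ∧
    Favg t (((Real.sqrt p : ℝ) : ℂ) • (1 : Matrix (Fin 2) (Fin 2) ℂ))
        (((Real.sqrt (1 - p) : ℝ) : ℂ) • σx) =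
      Favg t (((Real.sqrt p : ℝ) : ℂ) • (1 : Matrix (Fin 2) (Fin 2) ℂ))
        (((Real.sqrt (1 - p) : ℝ) : ℂ) • σz) := by
  have hx := favg_main t (Real.sqrt p) (Real.sqrt (1 - p)) σx hXX trPX trHX trX
  have hz := favg_main t (Real.sqrt p) (Real.sqrt (1 - p)) σz hZZ trPZ trHZ trZ
  have hsp : Real.sqrt p ^ 2 = p := Real.sq_sqrt hp₀
  have hsq : Real.sqrt (1 - p) ^ 2 = 1 - p := Real.sq_sqrt (by linarith)
  constructor
  · rw [hx]
    congr 1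
    rw [mul_pow, hsp]
    nlinarith [hsp, hsq]
  · rw [hx, hz]
end

section
/- Let t ∈ ℝ, p ∈ [0,1], and let E₀ = [[1,0],[0,√(1−p)]], E₁ = [[0,0],[0,√p]] be the Phase Damping Kraus operators. Set M_k := U_qs(t)† · (E_k ⊗ I₄) for k = 0,1 (noise acting on the first of the three qubits). Then the average fidelity F_avg := (1/(8·9))·(tr(M₀†M₀ + M₁†M₁) + |tr M₀|² + |tr M₁|²) equals (1/72)·((√(1−p) + 1)²·(cos(t) + 3)² + p·(cos(t) + 3)² + 8). -/
open Matrix Complex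

/-! ### Auxiliary material: diagonalization of `Hqs` -/

/-- Eigenvector matrix of `Hqs` (identity outside the `{3,5}` block). -/
noncomputable def Vm : Matrix (Fin 8) (Fin 8) ℂ :=
  Matrix.of fun i j =>
    if i = 3 ∧ j = 3 then 1 else if i = 3 ∧ j = 5 then 1
    else if i = 5 ∧ j = 3 then 1 else if i = 5 ∧ j = 5 then -1
    else if i = j then 1 else 0

/-- Inverse of `Vm`. -/
noncomputable def Wm : Matrix (Fin 8) (Fin 8) ℂ :=
  Matrix.of fun i j =>
    if i = 3 ∧ j = 3 then 1/2 else if i = 3 ∧ j = 5 then 1/2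
    else if i = 5 ∧ j = 3 then 1/2 else if i = 5 ∧ j = 5 then -(1/2)
    else if i = j then 1 else 0

/-- Eigenvalues of `-(i t) Hqs`. -/
noncomputable def dv (t : ℝ) : Fin 8 → ℂ :=
  fun i => if i = 3 then -(Complex.I * t) else if i = 5 then Complex.I * t else 0

/-- Explicit form of the evolution operator. -/
noncomputable def Uex (t : ℝ) : Matrix (Fin 8) (Fin 8) ℂ :=
  Matrix.of fun i j =>
    if i = j then (if i = 3 ∨ i = 5 then ((Real.cos t : ℝ) : ℂ) else 1)
    else if (i = 3 ∧ j = 5) ∨ (i = 5 ∧ j = 3) then -Complex.I * ((Real.sin t : ℝ) : ℂ)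
    else 0

set_option maxHeartbeats 1000000 in
lemma hVW : Vm * Wm = 1 := by
  ext i j
  fin_cases i <;> fin_cases j <;>
    simp [Vm, Wm, Matrix.mul_apply, Fin.sum_univ_eight, Matrix.one_apply] <;> norm_num

set_option maxHeartbeats 1000000 in
lemma hWV : Wm * Vm = 1 := by
  ext i j
  fin_cases i <;> fin_cases j <;>
    simp [Vm, Wm, Matrix.mul_apply, Fin.sum_univ_eight, Matrix.one_apply] <;> norm_num

set_option maxHeartbeats 1000000 in
lemma conj_eq (t : ℝ) :
    (-(Complex.I * (t : ℂ))) • Hqs = Vm * Matrix.diagonal (dv t) * Wm := by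
  ext i j
  fin_cases i <;> fin_cases j <;>
    simp [Vm, Wm, Hqs, dv, Matrix.mul_apply, Fin.sum_univ_eight, Matrix.diagonal] <;> ring

noncomputable def Vu : (Matrix (Fin 8) (Fin 8) ℂ)ˣ := ⟨Vm, Wm, hVW, hWV⟩

set_option maxHeartbeats 1000000 in
lemma Uqs_eq_s19 (t : ℝ) : Uqs t = Uex t := by
  have he1 : Complex.exp (-(Complex.I * (t : ℂ))) =
      Complex.cos t - Complex.sin t * Complex.I := by
    rw [show -(Complex.I * (t:ℂ)) = (-(t:ℂ)) * Complex.I by ring, Complex.exp_mul_I,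
      Complex.cos_neg, Complex.sin_neg]
    ring
  have he2 : Complex.exp (Complex.I * (t : ℂ)) =
      Complex.cos t + Complex.sin t * Complex.I := by
    rw [show Complex.I * (t:ℂ) = ((t:ℂ)) * Complex.I by ring, Complex.exp_mul_I]
  rw [Uqs, conj_eq]
  have h1 : Vm * Matrix.diagonal (dv t) * Wm = (Vu : Matrix (Fin 8) (Fin 8) ℂ) *
      Matrix.diagonal (dv t) * ((Vu⁻¹ : (Matrix (Fin 8) (Fin 8) ℂ)ˣ) : Matrix (Fin 8) (Fin 8) ℂ) := rfl
  rw [h1, Matrix.exp_units_conj, Matrix.exp_diagonal]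
  have h2 : NormedSpace.exp (dv t) = fun i => Complex.exp (dv t i) := by
    funext i
    rw [Pi.coe_exp, ← Complex.exp_eq_exp_ℂ]
  rw [h2]
  show Vm * Matrix.diagonal _ * Wm = Uex t
  ext i j
  fin_cases i <;> fin_cases j <;>
    simp [Vm, Wm, Uex, dv, Matrix.mul_apply, Fin.sum_univ_eight, Matrix.diagonal,
      he1, he2] <;>
    ring

set_option maxHeartbeats 1000000 in
lemma hUnit (t : ℝ) : Uex t * (Uex t)ᴴ = 1 := by
  ext i j
  fin_cases i <;> fin_cases j <;>
    simp [Uex, Matrix.mul_apply, Fin.sum_univ_eight, Matrix.one_apply,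
      Matrix.conjTranspose_apply, ← Complex.cos_conj, ← Complex.sin_conj,
      Complex.conj_ofReal] <;>
    first
      | linear_combination Complex.sin_sq_add_cos_sq (t : ℂ)
          - Complex.sin (t : ℂ) ^ 2 * Complex.I_sq
      | linear_combination Complex.sin_sq_add_cos_sq (t : ℂ)
      | ring

lemma MHM (t : ℝ) (D : Matrix (Fin 8) (Fin 8) ℂ) :
    ((Uex t)ᴴ * D)ᴴ * ((Uex t)ᴴ * D) = Dᴴ * D := by
  rw [Matrix.conjTranspose_mul, Matrix.conjTranspose_conjTranspose, Matrix.mul_assoc,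
    ← Matrix.mul_assoc (Uex t), hUnit, Matrix.one_mul]

set_option maxHeartbeats 1000000 in
lemma kron_diag (a b : ℂ) :
    kronI4 !![a, 0; 0, b] = Matrix.diagonal (fun i : Fin 8 => if (i : ℕ) < 4 then a else b) := by
  ext i j
  fin_cases i <;> fin_cases j <;>
    simp [kronI4, Matrix.diagonal,
      show ((0 : Fin 8) : ℕ) = 0 from rfl, show ((1 : Fin 8) : ℕ) = 1 from rfl,
      show ((2 : Fin 8) : ℕ) = 2 from rfl, show ((3 : Fin 8) : ℕ) = 3 from rfl,
      show ((4 : Fin 8) : ℕ) = 4 from rfl, show ((5 : Fin 8) : ℕ) = 5 from rfl,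
      show ((6 : Fin 8) : ℕ) = 6 from rfl, show ((7 : Fin 8) : ℕ) = 7 from rfl]


set_option maxHeartbeats 1000000 in
/-- Average fidelity of the quantum switch under Phase Damping noise on the first
qubit, with Kraus operators E₀ = [[1,0],[0,√(1−p)]] and E₁ = [[0,0],[0,√p]]:
F_avg = (1/72)·((√(1−p)+1)²·(cos t + 3)² + p·(cos t + 3)² + 8). -/
theorem average_fidelity_phase_damping (t : ℝ) (p : ℝ) (hp₀ : 0 ≤ p) (hp₁ : p ≤ 1) :
    Favg t !![1, 0; 0, ((Real.sqrt (1 - p) : ℝ) : ℂ)]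
        !![0, 0; 0, ((Real.sqrt p : ℝ) : ℂ)] =
      ((1 / 72 * ((Real.sqrt (1 - p) + 1) ^ 2 * (Real.cos t + 3) ^ 2
          + p * (Real.cos t + 3) ^ 2 + 8) : ℝ) : ℂ) := by
  have hs : (Real.sqrt (1 - p)) ^ 2 = 1 - p := Real.sq_sqrt (by linarith)
  have hq : (Real.sqrt p) ^ 2 = p := Real.sq_sqrt hp₀
  set s := Real.sqrt (1 - p) with hs'
  set q := Real.sqrt p with hq'
  rw [Favg, Uqs_eq_s19, kron_diag, kron_diag, MHM, MHM]
  have htr0 : ((Uex t)ᴴ * Matrix.diagonal (fun i : Fin 8 => if (i : ℕ) < 4 then (1:ℂ) else s)).trace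
      = (((1 + s) * (3 + Real.cos t) : ℝ) : ℂ) := by
    simp [Matrix.trace, Matrix.mul_apply, Matrix.diagonal, Fin.sum_univ_eight, Uex,
      Matrix.conjTranspose_apply, Matrix.diag, ← Complex.cos_conj, ← Complex.sin_conj,
      Complex.conj_ofReal, show ((0 : Fin 8) : ℕ) = 0 from rfl, show ((1 : Fin 8) : ℕ) = 1 from rfl,
      show ((2 : Fin 8) : ℕ) = 2 from rfl, show ((3 : Fin 8) : ℕ) = 3 from rfl,
      show ((4 : Fin 8) : ℕ) = 4 from rfl, show ((5 : Fin 8) : ℕ) = 5 from rfl,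
      show ((6 : Fin 8) : ℕ) = 6 from rfl, show ((7 : Fin 8) : ℕ) = 7 from rfl]
    push_cast
    ring
  have htr1 : ((Uex t)ᴴ * Matrix.diagonal (fun i : Fin 8 => if (i : ℕ) < 4 then (0:ℂ) else q)).trace
      = ((q * (3 + Real.cos t) : ℝ) : ℂ) := by
    simp [Matrix.trace, Matrix.mul_apply, Matrix.diagonal, Fin.sum_univ_eight, Uex,
      Matrix.conjTranspose_apply, Matrix.diag, ← Complex.cos_conj, ← Complex.sin_conj,
      Complex.conj_ofReal, show ((0 : Fin 8) : ℕ) = 0 from rfl, show ((1 : Fin 8) : ℕ) = 1 from rfl,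
      show ((2 : Fin 8) : ℕ) = 2 from rfl, show ((3 : Fin 8) : ℕ) = 3 from rfl,
      show ((4 : Fin 8) : ℕ) = 4 from rfl, show ((5 : Fin 8) : ℕ) = 5 from rfl,
      show ((6 : Fin 8) : ℕ) = 6 from rfl, show ((7 : Fin 8) : ℕ) = 7 from rfl]
    push_cast
    ring
  rw [htr0, htr1, Complex.norm_real, Complex.norm_real, Real.norm_eq_abs, Real.norm_eq_abs]
  have hsC : (s : ℂ) * s = 1 - p := by
    rw [← Complex.ofReal_mul, ← pow_two, hs]; push_cast; ring
  have hqC : (q : ℂ) * q = p := by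
    rw [← Complex.ofReal_mul, ← pow_two, hq]
  have htrD : ((Matrix.diagonal (fun i : Fin 8 => if (i : ℕ) < 4 then (1:ℂ) else s))ᴴ *
        Matrix.diagonal (fun i : Fin 8 => if (i : ℕ) < 4 then (1:ℂ) else s)
      + (Matrix.diagonal (fun i : Fin 8 => if (i : ℕ) < 4 then (0:ℂ) else q))ᴴ *
        Matrix.diagonal (fun i : Fin 8 => if (i : ℕ) < 4 then (0:ℂ) else q)).trace = 8 := by
    simp [Matrix.trace, Matrix.mul_apply, Matrix.diagonal, Fin.sum_univ_eight,
      Matrix.conjTranspose_apply, Matrix.diag, Complex.conj_ofReal, show ((0 : Fin 8) : ℕ) = 0 from rfl, show ((1 : Fin 8) : ℕ) = 1 from rfl,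
      show ((2 : Fin 8) : ℕ) = 2 from rfl, show ((3 : Fin 8) : ℕ) = 3 from rfl,
      show ((4 : Fin 8) : ℕ) = 4 from rfl, show ((5 : Fin 8) : ℕ) = 5 from rfl,
      show ((6 : Fin 8) : ℕ) = 6 from rfl, show ((7 : Fin 8) : ℕ) = 7 from rfl]
    linear_combination (4 : ℂ) * hsC + 4 * hqC
  rw [htrD]
  rw [_root_.sq_abs, _root_.sq_abs]
  have hpq : (q : ℂ)^2 = p := by rw [← Complex.ofReal_pow, hq]
  push_cast [Complex.ofReal_cos]
  linear_combination ((3 : ℂ) + Complex.cos (t : ℂ))^2 / 72 * hpq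
end
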